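/- Let (X,d_X) be a semimetric space. If there exists a weak similarity Φ : X → X that is not an isometry, then there exist sets A₁, A₂, A₃ ⊆ D(X) with A₂ ≠ ∅ such that D(X) (with the order induced from ℝ) is order-isomorphic to the ordered sum A₁ + A₂·tp(ℤ) + A₃, i.e., to the lexicographic sum A₁ ⊕ (ℤ ×_lex A₂) ⊕ A₃ where the middle summand consists of ℤ-many consecutive copies of A₂. -/

import Mathlib

open Sum

private noncomputable def subIso {D : Set ℝ} (B : Set ↥D) :
    ↥B ≃o ↥(Subtype.val '' B) := by
  refine StrictMono.orderIsoOfSurjective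
    (fun x => ⟨x.1.1, ⟨x.1, x.2, rfl⟩⟩) ?_ ?_
  · intro x y h
    exact Subtype.mk_lt_mk.mpr (Subtype.coe_lt_coe.mpr h)
  · rintro ⟨r, s, hs, rfl⟩
    exact ⟨⟨s, hs⟩, rfl⟩

private noncomputable def sumLexIso {α β γ δ : Type*} [LinearOrder α] [LinearOrder β]
    [LinearOrder γ] [LinearOrder δ] (e₁ : α ≃o γ) (e₂ : β ≃o δ) :
    (α ⊕ₗ β) ≃o (γ ⊕ₗ δ) := by
  refine StrictMono.orderIsoOfSurjective
    (fun z => toLex (Sum.map e₁ e₂ (ofLex z))) ?_ ?_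
  · intro x y h
    rcases x with a | b <;> rcases y with c | d
    · exact Sum.Lex.inl_lt_inl_iff.mpr (e₁.strictMono (Sum.Lex.inl_lt_inl_iff.mp h))
    · exact Sum.Lex.inl_lt_inr _ _
    · exact absurd h (Sum.Lex.not_inr_lt_inl)
    · exact Sum.Lex.inr_lt_inr_iff.mpr (e₂.strictMono (Sum.Lex.inr_lt_inr_iff.mp h))
  · intro z
    rcases z with c | d
    · refine ⟨toLex (Sum.inl (e₁.symm c)), ?_⟩
      show toLex (Sum.inl (e₁ (e₁.symm c))) = _
      rw [OrderIso.apply_symm_apply]; rfl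
    · refine ⟨toLex (Sum.inr (e₂.symm d)), ?_⟩
      show toLex (Sum.inr (e₂ (e₂.symm d))) = _
      rw [OrderIso.apply_symm_apply]; rfl

private noncomputable def prodLexIso {β δ : Type*} [LinearOrder β] [LinearOrder δ]
    (e : β ≃o δ) : (ℤ ×ₗ β) ≃o (ℤ ×ₗ δ) := by
  refine StrictMono.orderIsoOfSurjective
    (fun z => toLex ((ofLex z).1, e (ofLex z).2)) ?_ ?_
  · intro x y h
    rcases x with ⟨m, b⟩
    rcases y with ⟨n, b'⟩
    have h' := Prod.Lex.lt_iff.mp h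
    refine Prod.Lex.lt_iff.mpr ?_
    rcases h' with h' | ⟨h1, h2⟩
    · exact Or.inl h'
    · exact Or.inr ⟨h1, e.strictMono h2⟩
  · intro z
    rcases z with ⟨n, d⟩
    refine ⟨toLex (n, e.symm d), ?_⟩
    show toLex (n, e (e.symm d)) = _
    rw [OrderIso.apply_symm_apply]; rfl


private lemma keyIso {L : Type*} [LinearOrder L] (G : L ≃o L) (a : L) (ha : a < G a) :
    ∃ B₁ B₂ B₃ : Set L, a ∈ B₂ ∧
      Nonempty (L ≃o (↥B₁ ⊕ₗ ((ℤ ×ₗ ↥B₂) ⊕ₗ ↥B₃))) := by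
  classical
  set orb : ℤ → L := fun n => (G ^ n) a with horb
  have hpow : ∀ (m k : ℤ) (y : L), (G ^ m) ((G ^ k) y) = (G ^ (m + k)) y := by
    intro m k y; rw [zpow_add]; rfl
  have horbsucc : ∀ n : ℤ, orb (n+1) = (G ^ n) (G a) := by
    intro n; simp only [horb]; rw [zpow_add, zpow_one]; rfl
  have horbmono : StrictMono orb := by
    apply strictMono_int_of_lt_succ
    intro n
    show (G ^ n) a < orb (n+1)
    rw [horbsucc n]
    exact (G ^ n).strictMono ha
  set B₁ : Set L := {x | ∀ n : ℤ, x < orb n} with hB₁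
  set B₂ : Set L := {x | a ≤ x ∧ x < G a} with hB₂
  set B₃ : Set L := {x | ∀ n : ℤ, orb n ≤ x} with hB₃
  have hex : ∀ x : L, ¬ (∀ n : ℤ, x < orb n) → ¬ (∀ n : ℤ, orb n ≤ x) →
      ∃ n : ℤ, orb n ≤ x ∧ x < orb (n + 1) := by
    intro x h1 h3
    push_neg at h1 h3
    obtain ⟨k, hk⟩ := h1
    obtain ⟨m, hm⟩ := h3
    obtain ⟨n, hn, hmax⟩ := Int.exists_greatest_of_bdd
      (P := fun n => orb n ≤ x)
      ⟨m, fun z hz => le_of_lt (horbmono.lt_iff_lt.mp (lt_of_le_of_lt hz hm))⟩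
      ⟨k, hk⟩
    refine ⟨n, hn, ?_⟩
    by_contra hcon
    exact absurd (hmax _ (not_lt.mp hcon)) (by omega)
  have huniq : ∀ {m n : ℤ} {x : L}, orb m ≤ x → x < orb (m+1) →
      orb n ≤ x → x < orb (n+1) → m = n := by
    intro m n x h1 h2 h3 h4
    have hmn : m < n + 1 := horbmono.lt_iff_lt.mp (lt_of_le_of_lt h1 h4)
    have hnm : n < m + 1 := horbmono.lt_iff_lt.mp (lt_of_le_of_lt h3 h2)
    omega
  have hmem2 : ∀ (x : L) (h1 : ¬ (∀ n : ℤ, x < orb n)) (h3 : ¬ (∀ n : ℤ, orb n ≤ x)),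
      (G ^ (-(hex x h1 h3).choose)) x ∈ B₂ := by
    intro x h1 h3
    obtain ⟨hl, hr⟩ := (hex x h1 h3).choose_spec
    set n := (hex x h1 h3).choose with hn
    constructor
    · have := (G ^ (-n)).monotone hl
      rwa [show (G ^ (-n)) (orb n) = a by
        simp only [horb]; rw [hpow, neg_add_cancel, zpow_zero]; rfl] at this
    · have := (G ^ (-n)).strictMono hr
      rwa [show (G ^ (-n)) (orb (n+1)) = G a by
        simp only [horb]; rw [hpow, show -n + (n+1) = 1 by ring, zpow_one]] at this
  refine ⟨B₁, B₂, B₃, ⟨le_refl a, ha⟩, ?_⟩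
  refine ⟨StrictMono.orderIsoOfSurjective
    (fun x : L =>
      if h1 : ∀ n : ℤ, x < orb n then toLex (Sum.inl (⟨x, h1⟩ : ↥B₁))
      else if h3 : ∀ n : ℤ, orb n ≤ x then
        toLex (Sum.inr (toLex (Sum.inr (⟨x, h3⟩ : ↥B₃))))
      else toLex (Sum.inr (toLex (Sum.inl (toLex
        ((hex x h1 h3).choose,
         (⟨(G ^ (-(hex x h1 h3).choose)) x, hmem2 x h1 h3⟩ : ↥B₂)))))))
    ?_ ?_⟩
  · -- StrictMono
    intro x y hxy
    dsimp only
    split_ifs with h1x h1y h1y h3x h1y h3y h1y h3y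
    · exact Sum.Lex.inl_lt_inl_iff.mpr (Subtype.mk_lt_mk.mpr hxy)
    · exact Sum.Lex.inl_lt_inr _ _
    · exact Sum.Lex.inl_lt_inr _ _
    · exact absurd (h3x 0) (not_le.mpr (lt_trans hxy (h1y 0)))
    · exact Sum.Lex.inr_lt_inr_iff.mpr (Sum.Lex.inr_lt_inr_iff.mpr (Subtype.mk_lt_mk.mpr hxy))
    · -- x ∈ B₃, y middle: contradiction
      exfalso
      push_neg at h3y
      obtain ⟨n, hn⟩ := h3y
      exact absurd (h3x n) (not_le.mpr (lt_trans hxy hn))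
    · -- x middle, y ∈ B₁ : contradiction
      exfalso
      obtain ⟨hl, _⟩ := (hex x h1x h3x).choose_spec
      exact absurd (h1y _) (not_lt.mpr (le_trans hl (le_of_lt hxy)))
    · -- x middle, y ∈ B₃
      exact Sum.Lex.inr_lt_inr_iff.mpr (Sum.Lex.inl_lt_inr _ _)
    · -- both middle
      apply Sum.Lex.inr_lt_inr_iff.mpr
      apply Sum.Lex.inl_lt_inl_iff.mpr
      rw [Prod.Lex.lt_iff]
      have hcx := (hex x h1x h3x).choose_spec
      have hcy := (hex y h1y h3y).choose_spec
      have hmn : (hex x h1x h3x).choose ≤ (hex y h1y h3y).choose := by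
        have : (hex x h1x h3x).choose < (hex y h1y h3y).choose + 1 :=
          horbmono.lt_iff_lt.mp (lt_of_le_of_lt hcx.1 (lt_trans hxy hcy.2))
        omega
      rcases lt_or_eq_of_le hmn with hlt | heq
      · exact Or.inl hlt
      · refine Or.inr ⟨heq, Subtype.mk_lt_mk.mpr ?_⟩
        calc (G ^ (-(hex x h1x h3x).choose)) x
            = (G ^ (-(hex y h1y h3y).choose)) x := by rw [heq]
          _ < (G ^ (-(hex y h1y h3y).choose)) y := (G ^ _).strictMono hxy
  · -- Surjective
    intro z
    rcases z with u | w2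
    · obtain ⟨x, hx⟩ := u
      refine ⟨x, ?_⟩
      have hx' : ∀ n : ℤ, x < orb n := hx
      dsimp only
      rw [dif_pos hx']
      rfl
    · rcases w2 with p | u
      · rcases p with ⟨n, y, hy⟩
        refine ⟨(G ^ n) y, ?_⟩
        have hf1 : ¬ (∀ k : ℤ, (G ^ n) y < orb k) := by
          intro hk
          have : orb n ≤ (G ^ n) y := (G ^ n).monotone hy.1
          exact absurd (hk n) (not_lt.mpr this)
        have hub : (G ^ n) y < orb (n+1) := by
          have := (G ^ n).strictMono hy.2
          rwa [← horbsucc n] at this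
        have hf3 : ¬ (∀ k : ℤ, orb k ≤ (G ^ n) y) := by
          intro hk
          exact absurd (hk (n+1)) (not_le.mpr hub)
        dsimp only
        rw [dif_neg hf1, dif_neg hf3]
        obtain ⟨hl, hr⟩ := (hex ((G ^ n) y) hf1 hf3).choose_spec
        have hc : (hex ((G ^ n) y) hf1 hf3).choose = n :=
          huniq hl hr ((G ^ n).monotone hy.1) hub
        have hv : (G ^ (-(hex ((G ^ n) y) hf1 hf3).choose)) ((G ^ n) y) = y := by
          rw [hc, hpow, neg_add_cancel, zpow_zero]; rfl
        refine congrArg (fun p : ℤ × ↥B₂ =>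
          toLex (Sum.inr (toLex (Sum.inl (toLex p))))) ?_
        rw [Prod.ext_iff]
        exact ⟨hc, Subtype.ext hv⟩
      · obtain ⟨x, hx⟩ := u
        refine ⟨x, ?_⟩
        have hf1 : ¬ (∀ k : ℤ, x < orb k) := fun h => absurd (hx 0) (not_le.mpr (h 0))
        have hx' : ∀ n : ℤ, orb n ≤ x := hx
        dsimp only
        rw [dif_neg hf1, dif_pos hx']
        rfl


/-- A semimetric on `X`: nonnegative, symmetric, vanishing exactly on the diagonal. -/
def IsSemimetric {X : Type*} (d : X → X → ℝ) : Prop :=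
  (∀ x y, 0 ≤ d x y) ∧ (∀ x y, d x y = d y x) ∧ ∀ x y, d x y = 0 ↔ x = y

/-- The distance set `D(X)` of a semimetric space `(X, d)`. -/
def distSet {X : Type*} (d : X → X → ℝ) : Set ℝ := {r | ∃ x y, d x y = r}

theorem stmt15 {X : Type*} (dX : X → X → ℝ) (hX : IsSemimetric dX)
    (h : ∃ (Φ : X → X) (f : ℝ → ℝ),
      Function.Surjective Φ ∧ StrictMonoOn f (distSet dX) ∧
      Set.MapsTo f (distSet dX) (distSet dX) ∧
      (∀ x y, dX x y = f (dX (Φ x) (Φ y))) ∧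
      ¬ ∀ x y, dX (Φ x) (Φ y) = dX x y) :
    ∃ A₁ A₂ A₃ : Set ℝ, A₁ ⊆ distSet dX ∧ A₂ ⊆ distSet dX ∧ A₃ ⊆ distSet dX ∧
      A₂.Nonempty ∧
      Nonempty (↥(distSet dX) ≃o (↥A₁ ⊕ₗ ((ℤ ×ₗ ↥A₂) ⊕ₗ ↥A₃))) := by
  classical
  obtain ⟨Φ, f, hsurj, hmono, hmaps, heq, hne⟩ := h
  set D := distSet dX with hD
  have Fmono : StrictMono (fun s : ↥D => (⟨f s.1, hmaps s.2⟩ : ↥D)) := by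
    intro s t hst
    exact Subtype.mk_lt_mk.mpr (hmono s.2 t.2 (Subtype.coe_lt_coe.mpr hst))
  have Fsurj : Function.Surjective (fun s : ↥D => (⟨f s.1, hmaps s.2⟩ : ↥D)) := by
    rintro ⟨r, x, y, rfl⟩
    refine ⟨⟨dX (Φ x) (Φ y), Φ x, Φ y, rfl⟩, ?_⟩
    exact Subtype.ext (heq x y).symm
  set G₀ : ↥D ≃o ↥D := StrictMono.orderIsoOfSurjective _ Fmono Fsurj with hG₀
  push_neg at hne
  obtain ⟨x, y, hxy⟩ := hne
  set s : ↥D := ⟨dX (Φ x) (Φ y), Φ x, Φ y, rfl⟩ with hs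
  have hGs : (G₀ s : ℝ) = dX x y := by
    have h1 : G₀ s = ⟨f s.1, hmaps s.2⟩ := rfl
    rw [h1]
    exact (heq x y).symm
  have hne' : G₀ s ≠ s := by
    intro hcon
    apply hxy
    have : (G₀ s : ℝ) = (s : ℝ) := by rw [hcon]
    rw [hGs] at this
    exact this.symm
  obtain ⟨G, a, ha⟩ : ∃ (G : ↥D ≃o ↥D) (a : ↥D), a < G a := by
    rcases lt_or_gt_of_ne hne' with h1 | h1
    · refine ⟨G₀.symm, G₀ s, ?_⟩
      rw [OrderIso.symm_apply_apply]
      exact h1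
    · exact ⟨G₀, s, h1⟩
  obtain ⟨B₁, B₂, B₃, haB₂, ⟨e⟩⟩ := keyIso G a ha
  refine ⟨Subtype.val '' B₁, Subtype.val '' B₂, Subtype.val '' B₃, ?_, ?_, ?_,
    ⟨a.1, ⟨a, haB₂, rfl⟩⟩, ?_⟩
  · rintro r ⟨t, _, rfl⟩; exact t.2
  · rintro r ⟨t, _, rfl⟩; exact t.2
  · rintro r ⟨t, _, rfl⟩; exact t.2
  · exact ⟨e.trans (sumLexIso (subIso B₁)
      (sumLexIso (prodLexIso (subIso B₂)) (subIso B₃)))⟩
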